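/- Let n ≥ 4, let C be a trace-free Weyl candidate on ℝⁿ, let ℓ, m be null vectors with ℓᵀηm = 1, and set u = (ℓ − m)/√2 (a unit timelike vector). Then: (1) θ_u·C = C (C is purely electric with respect to u) if and only if for all vectors x, y, z, w that are η-orthogonal to both ℓ and m one has C(ℓ,x,ℓ,y) = C(m,x,m,y), C(ℓ,x,y,z) = C(m,x,y,z), and C(ℓ,m,x,y) = 0; (2) θ_u·C = −C (C is purely magnetic with respect to u) if and only if for all such x, y, z, w one has C(ℓ,x,ℓ,y) = −C(m,x,m,y), C(ℓ,x,y,z) = −C(m,x,y,z), and C(x,y,z,w) = 0. -/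

import Mathlib

open Matrix Finset
noncomputable section
section SUMS
variable {n : ℕ}

lemma sum_out2 (F : Fin n → Fin n → Fin n → ℝ) :
    ∑ a, ∑ b, ∑ x, F a b x = ∑ x, ∑ a, ∑ b, F a b x :=
  calc ∑ a, ∑ b, ∑ x, F a b x = ∑ a, ∑ x, ∑ b, F a b x :=
        Finset.sum_congr rfl fun _ _ => Finset.sum_comm
    _ = ∑ x, ∑ a, ∑ b, F a b x := Finset.sum_comm

lemma sum_out3 (F : Fin n → Fin n → Fin n → Fin n → ℝ) :
    ∑ a, ∑ b, ∑ c, ∑ x, F a b c x = ∑ x, ∑ a, ∑ b, ∑ c, F a b c x :=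
  calc ∑ a, ∑ b, ∑ c, ∑ x, F a b c x = ∑ a, ∑ x, ∑ b, ∑ c, F a b c x :=
        Finset.sum_congr rfl fun _ _ => sum_out2 _
    _ = ∑ x, ∑ a, ∑ b, ∑ c, F a b c x := Finset.sum_comm

lemma sum_out4 (F : Fin n → Fin n → Fin n → Fin n → Fin n → ℝ) :
    ∑ a, ∑ b, ∑ c, ∑ d, ∑ x, F a b c d x = ∑ x, ∑ a, ∑ b, ∑ c, ∑ d, F a b c d x :=
  calc ∑ a, ∑ b, ∑ c, ∑ d, ∑ x, F a b c d x = ∑ a, ∑ x, ∑ b, ∑ c, ∑ d, F a b c d x :=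
        Finset.sum_congr rfl fun _ _ => sum_out3 _
    _ = ∑ x, ∑ a, ∑ b, ∑ c, ∑ d, F a b c d x := Finset.sum_comm

lemma sum_rot3 (G : Fin n → Fin n → Fin n → ℝ) :
    ∑ b, ∑ c, ∑ d, G b c d = ∑ c, ∑ d, ∑ b, G b c d :=
  calc ∑ b, ∑ c, ∑ d, G b c d = ∑ c, ∑ b, ∑ d, G b c d := Finset.sum_comm
    _ = ∑ c, ∑ d, ∑ b, G b c d := Finset.sum_congr rfl fun _ _ => Finset.sum_comm

lemma sum_pairswap (F : Fin n → Fin n → Fin n → Fin n → ℝ) :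
    ∑ a, ∑ b, ∑ c, ∑ d, F a b c d = ∑ c, ∑ d, ∑ a, ∑ b, F a b c d :=
  calc ∑ a, ∑ b, ∑ c, ∑ d, F a b c d = ∑ c, ∑ a, ∑ b, ∑ d, F a b c d :=
        sum_out2 (fun a b c => ∑ d, F a b c d)
    _ = ∑ c, ∑ d, ∑ a, ∑ b, F a b c d := Finset.sum_congr rfl fun _ _ => sum_out2 _

end SUMS

def eta (n : ℕ) : Matrix (Fin n) (Fin n) ℝ :=
  Matrix.diagonal fun i => if i.val = 0 then (-1 : ℝ) else 1

def IsNull {n : ℕ} (v : Fin n → ℝ) : Prop :=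
  v ≠ 0 ∧ v ⬝ᵥ (eta n).mulVec v = 0

def theta {n : ℕ} (u : Fin n → ℝ) : Matrix (Fin n) (Fin n) ℝ :=
  1 + (2 : ℝ) • vecMulVec u ((eta n).mulVec u)

def pull {n : ℕ} (Λ : Matrix (Fin n) (Fin n) ℝ)
    (C : Fin n → Fin n → Fin n → Fin n → ℝ) : Fin n → Fin n → Fin n → Fin n → ℝ :=
  fun a b c d => ∑ a', ∑ b', ∑ c', ∑ d',
    C a' b' c' d' * Λ a' a * Λ b' b * Λ c' c * Λ d' d

def ap {n : ℕ} (C : Fin n → Fin n → Fin n → Fin n → ℝ)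
    (v₁ v₂ v₃ v₄ : Fin n → ℝ) : ℝ :=
  ∑ a, ∑ b, ∑ c, ∑ d, C a b c d * v₁ a * v₂ b * v₃ c * v₄ d

section AP
variable {n : ℕ} (C D : Fin n → Fin n → Fin n → Fin n → ℝ)

def bv (a : Fin n) : Fin n → ℝ := fun i => if i = a then 1 else 0

lemma ap_bv (a b c d : Fin n) : ap C (bv a) (bv b) (bv c) (bv d) = C a b c d := by
  simp [ap, bv, mul_ite, ite_mul, Finset.sum_ite_eq]

lemma ap_bv13 (a c : Fin n) (v w : Fin n → ℝ) :
    ap C (bv a) v (bv c) w = ∑ b, ∑ d, C a b c d * v b * w d := by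
  simp [ap, bv, mul_ite, ite_mul, Finset.sum_ite_eq]

lemma ap_tsub (v₁ v₂ v₃ v₄ : Fin n → ℝ) :
    ap (fun a b c d => C a b c d - D a b c d) v₁ v₂ v₃ v₄ = ap C v₁ v₂ v₃ v₄ - ap D v₁ v₂ v₃ v₄ := by
  simp [ap, sub_mul, Finset.sum_sub_distrib]

lemma ap_tadd (v₁ v₂ v₃ v₄ : Fin n → ℝ) :
    ap (fun a b c d => C a b c d + D a b c d) v₁ v₂ v₃ v₄ = ap C v₁ v₂ v₃ v₄ + ap D v₁ v₂ v₃ v₄ := by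
  simp [ap, add_mul, Finset.sum_add_distrib]

lemma ap_tneg (v₁ v₂ v₃ v₄ : Fin n → ℝ) :
    ap (fun a b c d => -(C a b c d)) v₁ v₂ v₃ v₄ = -ap C v₁ v₂ v₃ v₄ := by
  simp [ap, neg_mul, Finset.sum_neg_distrib]

end AP

section AP2
variable {n : ℕ} (C : Fin n → Fin n → Fin n → Fin n → ℝ) (v₁ v₂ v₃ v₄ : Fin n → ℝ)

lemma ap_expand₁ {v₁ : Fin n → ℝ} {r s : ℝ} {L M x : Fin n → ℝ}
    (h : v₁ = fun i => r * L i + s * M i + x i) (v₂ v₃ v₄ : Fin n → ℝ) :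
    ap C v₁ v₂ v₃ v₄ = r * ap C L v₂ v₃ v₄ + s * ap C M v₂ v₃ v₄ + ap C x v₂ v₃ v₄ := by
  subst h
  have key : ∀ a b c d, C a b c d * (r * L a + s * M a + x a) * v₂ b * v₃ c * v₄ d
      = r * (C a b c d * L a * v₂ b * v₃ c * v₄ d) + s * (C a b c d * M a * v₂ b * v₃ c * v₄ d) + C a b c d * x a * v₂ b * v₃ c * v₄ d := fun a b c d => by ring
  simp only [ap, key, Finset.sum_add_distrib, Finset.mul_sum]

lemma ap_expand₂ {v₂ : Fin n → ℝ} {r s : ℝ} {L M x : Fin n → ℝ}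
    (h : v₂ = fun i => r * L i + s * M i + x i) (v₁ v₃ v₄ : Fin n → ℝ) :
    ap C v₁ v₂ v₃ v₄ = r * ap C v₁ L v₃ v₄ + s * ap C v₁ M v₃ v₄ + ap C v₁ x v₃ v₄ := by
  subst h
  have key : ∀ a b c d, C a b c d * v₁ a * (r * L b + s * M b + x b) * v₃ c * v₄ d
      = r * (C a b c d * v₁ a * L b * v₃ c * v₄ d) + s * (C a b c d * v₁ a * M b * v₃ c * v₄ d) + C a b c d * v₁ a * x b * v₃ c * v₄ d := fun a b c d => by ring
  simp only [ap, key, Finset.sum_add_distrib, Finset.mul_sum]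

lemma ap_expand₃ {v₃ : Fin n → ℝ} {r s : ℝ} {L M x : Fin n → ℝ}
    (h : v₃ = fun i => r * L i + s * M i + x i) (v₁ v₂ v₄ : Fin n → ℝ) :
    ap C v₁ v₂ v₃ v₄ = r * ap C v₁ v₂ L v₄ + s * ap C v₁ v₂ M v₄ + ap C v₁ v₂ x v₄ := by
  subst h
  have key : ∀ a b c d, C a b c d * v₁ a * v₂ b * (r * L c + s * M c + x c) * v₄ d
      = r * (C a b c d * v₁ a * v₂ b * L c * v₄ d) + s * (C a b c d * v₁ a * v₂ b * M c * v₄ d) + C a b c d * v₁ a * v₂ b * x c * v₄ d := fun a b c d => by ring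
  simp only [ap, key, Finset.sum_add_distrib, Finset.mul_sum]

lemma ap_expand₄ {v₄ : Fin n → ℝ} {r s : ℝ} {L M x : Fin n → ℝ}
    (h : v₄ = fun i => r * L i + s * M i + x i) (v₁ v₂ v₃ : Fin n → ℝ) :
    ap C v₁ v₂ v₃ v₄ = r * ap C v₁ v₂ v₃ L + s * ap C v₁ v₂ v₃ M + ap C v₁ v₂ v₃ x := by
  subst h
  have key : ∀ a b c d, C a b c d * v₁ a * v₂ b * v₃ c * (r * L d + s * M d + x d)
      = r * (C a b c d * v₁ a * v₂ b * v₃ c * L d) + s * (C a b c d * v₁ a * v₂ b * v₃ c * M d) + C a b c d * v₁ a * v₂ b * v₃ c * x d := fun a b c d => by ring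
  simp only [ap, key, Finset.sum_add_distrib, Finset.mul_sum]
lemma ap_scale₁ (r : ℝ) (x v₂ v₃ v₄ : Fin n → ℝ) :
    ap C (fun i => r * x i) v₂ v₃ v₄ = r * ap C x v₂ v₃ v₄ := by
  simp only [ap, Finset.mul_sum]
  refine Finset.sum_congr rfl fun a _ => Finset.sum_congr rfl fun b _ =>
    Finset.sum_congr rfl fun c _ => Finset.sum_congr rfl fun d _ => by ring

lemma ap_scale₃ (r : ℝ) (x v₁ v₂ v₄ : Fin n → ℝ) :
    ap C v₁ v₂ (fun i => r * x i) v₄ = r * ap C v₁ v₂ x v₄ := by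
  simp only [ap, Finset.mul_sum]
  refine Finset.sum_congr rfl fun a _ => Finset.sum_congr rfl fun b _ =>
    Finset.sum_congr rfl fun c _ => Finset.sum_congr rfl fun d _ => by ring

lemma ap_zero₁ (v₂ v₃ v₄ : Fin n → ℝ) : ap C (fun _ => (0:ℝ)) v₂ v₃ v₄ = 0 := by
  simp [ap]

lemma ap_zero₃ (v₁ v₂ v₄ : Fin n → ℝ) : ap C v₁ v₂ (fun _ => (0:ℝ)) v₄ = 0 := by
  simp [ap]

lemma ap_sum₁ (F : Fin n → Fin n → ℝ) (v₂ v₃ v₄ : Fin n → ℝ) :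
    ap C (fun i => ∑ x, F x i) v₂ v₃ v₄ = ∑ x, ap C (F x) v₂ v₃ v₄ := by
  simp only [ap]
  rw [← sum_out4 (fun a b c d x => C a b c d * F x a * v₂ b * v₃ c * v₄ d)]
  refine Finset.sum_congr rfl fun a _ => Finset.sum_congr rfl fun b _ =>
    Finset.sum_congr rfl fun c _ => Finset.sum_congr rfl fun d _ => ?_
  rw [Finset.mul_sum, Finset.sum_mul, Finset.sum_mul, Finset.sum_mul]

lemma ap_sum₃ (F : Fin n → Fin n → ℝ) (v₁ v₂ v₄ : Fin n → ℝ) :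
    ap C v₁ v₂ (fun i => ∑ x, F x i) v₄ = ∑ x, ap C v₁ v₂ (F x) v₄ := by
  simp only [ap]
  rw [← sum_out4 (fun a b c d x => C a b c d * v₁ a * v₂ b * F x c * v₄ d)]
  refine Finset.sum_congr rfl fun a _ => Finset.sum_congr rfl fun b _ =>
    Finset.sum_congr rfl fun c _ => Finset.sum_congr rfl fun d _ => ?_
  rw [Finset.mul_sum, Finset.sum_mul]

end AP2
section AP3
variable {n : ℕ} (C : Fin n → Fin n → Fin n → Fin n → ℝ)

lemma sum_rot3' (G : Fin n → Fin n → Fin n → ℝ) :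
    ∑ b, ∑ c, ∑ d, G b c d = ∑ d, ∑ b, ∑ c, G b c d :=
  calc ∑ b, ∑ c, ∑ d, G b c d = ∑ b, ∑ d, ∑ c, G b c d :=
        Finset.sum_congr rfl fun _ _ => Finset.sum_comm
    _ = ∑ d, ∑ b, ∑ c, G b c d := Finset.sum_comm

lemma ap_swap12 (h : ∀ a b c d, C b a c d = -C a b c d) (v₁ v₂ v₃ v₄ : Fin n → ℝ) :
    ap C v₂ v₁ v₃ v₄ = -ap C v₁ v₂ v₃ v₄ :=
  calc ap C v₂ v₁ v₃ v₄
      = ∑ b, ∑ a, ∑ c, ∑ d, C a b c d * v₂ a * v₁ b * v₃ c * v₄ d := Finset.sum_comm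
    _ = ∑ b, ∑ a, ∑ c, ∑ d, -(C b a c d * v₁ b * v₂ a * v₃ c * v₄ d) := by
        refine Finset.sum_congr rfl fun b _ => Finset.sum_congr rfl fun a _ =>
          Finset.sum_congr rfl fun c _ => Finset.sum_congr rfl fun d _ => ?_
        rw [h b a c d]; ring
    _ = -ap C v₁ v₂ v₃ v₄ := by simp only [ap, Finset.sum_neg_distrib]

lemma ap_swap34 (h : ∀ a b c d, C a b d c = -C a b c d) (v₁ v₂ v₃ v₄ : Fin n → ℝ) :
    ap C v₁ v₂ v₄ v₃ = -ap C v₁ v₂ v₃ v₄ :=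
  calc ap C v₁ v₂ v₄ v₃
      = ∑ a, ∑ b, ∑ d, ∑ c, C a b c d * v₁ a * v₂ b * v₄ c * v₃ d :=
        Finset.sum_congr rfl fun a _ => Finset.sum_congr rfl fun b _ => Finset.sum_comm
    _ = ∑ a, ∑ b, ∑ d, ∑ c, -(C a b d c * v₁ a * v₂ b * v₃ d * v₄ c) := by
        refine Finset.sum_congr rfl fun a _ => Finset.sum_congr rfl fun b _ =>
          Finset.sum_congr rfl fun d _ => Finset.sum_congr rfl fun c _ => ?_
        rw [h a b d c]; ring
    _ = -ap C v₁ v₂ v₃ v₄ := by simp only [ap, Finset.sum_neg_distrib]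

lemma ap_pair (h : ∀ a b c d, C c d a b = C a b c d) (v₁ v₂ v₃ v₄ : Fin n → ℝ) :
    ap C v₃ v₄ v₁ v₂ = ap C v₁ v₂ v₃ v₄ :=
  calc ap C v₃ v₄ v₁ v₂
      = ∑ c, ∑ d, ∑ a, ∑ b, C a b c d * v₃ a * v₄ b * v₁ c * v₂ d :=
        sum_pairswap _
    _ = ∑ c, ∑ d, ∑ a, ∑ b, C c d a b * v₁ c * v₂ d * v₃ a * v₄ b := by
        refine Finset.sum_congr rfl fun c _ => Finset.sum_congr rfl fun d _ =>
          Finset.sum_congr rfl fun a _ => Finset.sum_congr rfl fun b _ => ?_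
        rw [h a b c d]; ring
    _ = ap C v₁ v₂ v₃ v₄ := rfl

lemma ap_bianchi (h : ∀ a b c d, C a b c d + C a c d b + C a d b c = 0)
    (v₁ v₂ v₃ v₄ : Fin n → ℝ) :
    ap C v₁ v₂ v₃ v₄ + ap C v₁ v₃ v₄ v₂ + ap C v₁ v₄ v₂ v₃ = 0 := by
  have e2 : ap C v₁ v₃ v₄ v₂
      = ∑ a, ∑ b, ∑ c, ∑ d, C a c d b * v₁ a * v₂ b * v₃ c * v₄ d :=
    calc ap C v₁ v₃ v₄ v₂
        = ∑ a, ∑ d, ∑ b, ∑ c, C a b c d * v₁ a * v₃ b * v₄ c * v₂ d :=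
          Finset.sum_congr rfl fun a _ => sum_rot3' _
      _ = ∑ a, ∑ b, ∑ c, ∑ d, C a c d b * v₁ a * v₂ b * v₃ c * v₄ d := by
          refine Finset.sum_congr rfl fun a _ => Finset.sum_congr rfl fun b _ =>
            Finset.sum_congr rfl fun c _ => Finset.sum_congr rfl fun d _ => by ring
  have e3 : ap C v₁ v₄ v₂ v₃
      = ∑ a, ∑ b, ∑ c, ∑ d, C a d b c * v₁ a * v₂ b * v₃ c * v₄ d :=
    calc ap C v₁ v₄ v₂ v₃
        = ∑ a, ∑ c, ∑ d, ∑ b, C a b c d * v₁ a * v₄ b * v₂ c * v₃ d :=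
          Finset.sum_congr rfl fun a _ => sum_rot3 _
      _ = ∑ a, ∑ b, ∑ c, ∑ d, C a d b c * v₁ a * v₂ b * v₃ c * v₄ d := by
          refine Finset.sum_congr rfl fun a _ => Finset.sum_congr rfl fun b _ =>
            Finset.sum_congr rfl fun c _ => Finset.sum_congr rfl fun d _ => by ring
  rw [e2, e3]
  show (∑ a, ∑ b, ∑ c, ∑ d, C a b c d * v₁ a * v₂ b * v₃ c * v₄ d) + _ + _ = 0
  simp only [← Finset.sum_add_distrib]
  refine Finset.sum_eq_zero fun a _ => Finset.sum_eq_zero fun b _ =>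
    Finset.sum_eq_zero fun c _ => Finset.sum_eq_zero fun d _ => ?_
  have hb := h a b c d
  linear_combination (v₁ a * v₂ b * v₃ c * v₄ d) * hb

lemma prod4 (K : ℝ) (f g h k : Fin n → ℝ) :
    K * (∑ a, f a) * (∑ b, g b) * (∑ c, h c) * (∑ d, k d)
      = ∑ a, ∑ b, ∑ c, ∑ d, K * f a * g b * h c * k d := by
  simp only [Finset.mul_sum, Finset.sum_mul]
  rw [sum_pairswap]
  rw [Finset.sum_comm]
  exact Finset.sum_congr rfl fun _ _ => Finset.sum_congr rfl fun _ _ => Finset.sum_comm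

lemma ap_pull (Λ : Matrix (Fin n) (Fin n) ℝ) (v₁ v₂ v₃ v₄ : Fin n → ℝ) :
    ap (pull Λ C) v₁ v₂ v₃ v₄ = ap C (Λ *ᵥ v₁) (Λ *ᵥ v₂) (Λ *ᵥ v₃) (Λ *ᵥ v₄) := by
  have hr : ap C (Λ *ᵥ v₁) (Λ *ᵥ v₂) (Λ *ᵥ v₃) (Λ *ᵥ v₄)
      = ∑ a', ∑ b', ∑ c', ∑ d', ∑ a, ∑ b, ∑ c, ∑ d,
          C a' b' c' d' * (Λ a' a * v₁ a) * (Λ b' b * v₂ b) * (Λ c' c * v₃ c) * (Λ d' d * v₄ d) := by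
    refine Finset.sum_congr rfl fun a' _ => Finset.sum_congr rfl fun b' _ =>
      Finset.sum_congr rfl fun c' _ => Finset.sum_congr rfl fun d' _ => ?_
    exact prod4 _ _ _ _ _
  rw [hr]
  have hl : ap (pull Λ C) v₁ v₂ v₃ v₄
      = ∑ a, ∑ b, ∑ c, ∑ d, ∑ a', ∑ b', ∑ c', ∑ d',
          C a' b' c' d' * Λ a' a * Λ b' b * Λ c' c * Λ d' d * v₁ a * v₂ b * v₃ c * v₄ d := by
    simp only [ap, pull, Finset.sum_mul]
  rw [hl]
  rw [sum_out4 (fun a b c d a' => ∑ b', ∑ c', ∑ d',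
        C a' b' c' d' * Λ a' a * Λ b' b * Λ c' c * Λ d' d * v₁ a * v₂ b * v₃ c * v₄ d)]
  refine Finset.sum_congr rfl fun a' _ => ?_
  rw [sum_out4 (fun a b c d b' => ∑ c', ∑ d',
        C a' b' c' d' * Λ a' a * Λ b' b * Λ c' c * Λ d' d * v₁ a * v₂ b * v₃ c * v₄ d)]
  refine Finset.sum_congr rfl fun b' _ => ?_
  rw [sum_out4 (fun a b c d c' => ∑ d',
        C a' b' c' d' * Λ a' a * Λ b' b * Λ c' c * Λ d' d * v₁ a * v₂ b * v₃ c * v₄ d)]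
  refine Finset.sum_congr rfl fun c' _ => ?_
  rw [sum_out4 (fun a b c d d' =>
        C a' b' c' d' * Λ a' a * Λ b' b * Λ c' c * Λ d' d * v₁ a * v₂ b * v₃ c * v₄ d)]
  refine Finset.sum_congr rfl fun d' _ => Finset.sum_congr rfl fun a _ =>
    Finset.sum_congr rfl fun b _ => Finset.sum_congr rfl fun c _ =>
    Finset.sum_congr rfl fun d _ => by ring

end AP3

section FRAME
variable {n : ℕ}

def eps {n : ℕ} (i : Fin n) : ℝ := if i.val = 0 then -1 else 1

lemma eps_sq (i : Fin n) : eps i * eps i = 1 := by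
  unfold eps; split <;> norm_num

def gg {n : ℕ} (v w : Fin n → ℝ) : ℝ := ∑ i, eps i * v i * w i

lemma g_dot (v w : Fin n → ℝ) : v ⬝ᵥ (eta n).mulVec w = gg v w := by
  refine Finset.sum_congr rfl fun i _ => ?_
  simp only [eta, Matrix.mulVec_diagonal, gg, eps]
  ring

lemma gg_symm (v w : Fin n → ℝ) : gg v w = gg w v := by
  refine Finset.sum_congr rfl fun i _ => by ring

lemma gg_bv (v : Fin n → ℝ) (a : Fin n) : gg v (bv a) = eps a * v a := by
  simp [gg, bv, mul_ite, Finset.sum_ite_eq']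

variable (l m : Fin n → ℝ)

def pp {n : ℕ} (l m : Fin n → ℝ) (v : Fin n → ℝ) : Fin n → ℝ :=
  fun i => v i - gg m v * l i - gg l v * m i

def sw {n : ℕ} (l m : Fin n → ℝ) (v : Fin n → ℝ) : Fin n → ℝ :=
  fun i => v i + (gg l v - gg m v) * (l i - m i)

lemma gg_pp_l (hll : gg l l = 0) (hlm : gg l m = 1) (v : Fin n → ℝ) :
    gg l (pp l m v) = 0 := by
  have h : ∀ i, eps i * l i * (pp l m v) i
      = eps i * l i * v i - gg m v * (eps i * l i * l i) - gg l v * (eps i * l i * m i) :=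
    fun i => by simp only [pp]; ring
  calc gg l (pp l m v)
      = ∑ i, (eps i * l i * v i - gg m v * (eps i * l i * l i) - gg l v * (eps i * l i * m i)) :=
        Finset.sum_congr rfl fun i _ => h i
    _ = gg l v - gg m v * gg l l - gg l v * gg l m := by
        rw [Finset.sum_sub_distrib, Finset.sum_sub_distrib, ← Finset.mul_sum, ← Finset.mul_sum]
        rfl
    _ = 0 := by rw [hll, hlm]; ring

lemma gg_pp_m (hmm : gg m m = 0) (hml : gg m l = 1) (v : Fin n → ℝ) :
    gg m (pp l m v) = 0 := by
  have h : ∀ i, eps i * m i * (pp l m v) i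
      = eps i * m i * v i - gg m v * (eps i * m i * l i) - gg l v * (eps i * m i * m i) :=
    fun i => by simp only [pp]; ring
  calc gg m (pp l m v)
      = ∑ i, (eps i * m i * v i - gg m v * (eps i * m i * l i) - gg l v * (eps i * m i * m i)) :=
        Finset.sum_congr rfl fun i _ => h i
    _ = gg m v - gg m v * gg m l - gg l v * gg m m := by
        rw [Finset.sum_sub_distrib, Finset.sum_sub_distrib, ← Finset.mul_sum, ← Finset.mul_sum]
        rfl
    _ = 0 := by rw [hmm, hml]; ring

lemma decomp_v (v : Fin n → ℝ) :
    v = fun i => gg m v * l i + gg l v * m i + pp l m v i :=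
  funext fun i => by simp only [pp]; ring

lemma decomp_sw (v : Fin n → ℝ) :
    sw l m v = fun i => gg l v * l i + gg m v * m i + pp l m v i :=
  funext fun i => by simp only [sw, pp]; ring

lemma decomp_bv (a : Fin n) :
    bv a = fun i => (eps a * m a) * l i + (eps a * l a) * m i + pp l m (bv a) i :=
  funext fun i => by simp only [pp, gg_bv]; ring

lemma sw_l (hll : gg l l = 0) (hml : gg m l = 1) : sw l m l = m :=
  funext fun i => by simp only [sw, hll, hml]; ring

lemma sw_m (hlm : gg l m = 1) (hmm : gg m m = 0) : sw l m m = l :=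
  funext fun i => by simp only [sw, hlm, hmm]; ring

lemma sw_orth {x : Fin n → ℝ} (h1 : gg l x = 0) (h2 : gg m x = 0) : sw l m x = x :=
  funext fun i => by simp only [sw, h1, h2]; ring

lemma pm_zero (hmm : gg m m = 0) (hml : gg m l = 1) :
    (fun i => ∑ a, m a * pp l m (bv a) i) = (fun _ => (0:ℝ)) := by
  funext i
  have h : ∀ a, m a * pp l m (bv a) i
      = m a * bv a i - (eps a * m a * m a) * l i - (eps a * m a * l a) * m i := fun a => by
    simp only [pp, gg_bv]; ring
  calc ∑ a, m a * pp l m (bv a) i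
      = ∑ a, (m a * bv a i - (eps a * m a * m a) * l i - (eps a * m a * l a) * m i) :=
        Finset.sum_congr rfl fun a _ => h a
    _ = m i - gg m m * l i - gg m l * m i := by
        rw [Finset.sum_sub_distrib, Finset.sum_sub_distrib, ← Finset.sum_mul, ← Finset.sum_mul,
          show (∑ a, m a * bv a i) = m i from by simp [bv, mul_ite, Finset.sum_ite_eq'],
          show (∑ a, eps a * m a * m a) = gg m m from rfl,
          show (∑ a, eps a * m a * l a) = gg m l from rfl]
    _ = 0 := by rw [hmm, hml]; ring

lemma pl_zero (hll : gg l l = 0) (hlm : gg l m = 1) :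
    (fun i => ∑ a, l a * pp l m (bv a) i) = (fun _ => (0:ℝ)) := by
  funext i
  have h : ∀ a, l a * pp l m (bv a) i
      = l a * bv a i - (eps a * l a * m a) * l i - (eps a * l a * l a) * m i := fun a => by
    simp only [pp, gg_bv]; ring
  calc ∑ a, l a * pp l m (bv a) i
      = ∑ a, (l a * bv a i - (eps a * l a * m a) * l i - (eps a * l a * l a) * m i) :=
        Finset.sum_congr rfl fun a _ => h a
    _ = l i - gg l m * l i - gg l l * m i := by
        rw [Finset.sum_sub_distrib, Finset.sum_sub_distrib, ← Finset.sum_mul, ← Finset.sum_mul,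
          show (∑ a, l a * bv a i) = l i from by simp [bv, mul_ite, Finset.sum_ite_eq'],
          show (∑ a, eps a * l a * m a) = gg l m from rfl,
          show (∑ a, eps a * l a * l a) = gg l l from rfl]
    _ = 0 := by rw [hll, hlm]; ring

lemma theta_mulVec {u : Fin n → ℝ} (hu : u = (Real.sqrt 2)⁻¹ • (l - m)) (v : Fin n → ℝ) :
    (theta u) *ᵥ v = sw l m v := by
  subst hu
  funext i
  have hc : (2 : ℝ) * ((Real.sqrt 2)⁻¹ * (Real.sqrt 2)⁻¹) = 1 := by
    rw [← mul_inv, Real.mul_self_sqrt (by norm_num : (0:ℝ) ≤ 2)]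
    norm_num
  have hth : ∀ j, theta ((Real.sqrt 2)⁻¹ • (l - m)) i j * v j
      = (if i = j then v j else 0)
        + (2 * ((Real.sqrt 2)⁻¹ * (Real.sqrt 2)⁻¹)) * ((l i - m i) * (eps j * (l j - m j) * v j)) := by
    intro j
    simp only [theta, Matrix.add_apply, Matrix.smul_apply, Matrix.one_apply,
      Matrix.vecMulVec_apply, Matrix.mulVec_diagonal, eta, Pi.smul_apply, Pi.sub_apply,
      smul_eq_mul, eps]
    by_cases h : i = j <;> by_cases hj : j.val = 0 <;> simp [h, hj] <;> ring
  calc ((theta ((Real.sqrt 2)⁻¹ • (l - m))) *ᵥ v) i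
      = ∑ j, theta ((Real.sqrt 2)⁻¹ • (l - m)) i j * v j := rfl
    _ = ∑ j, ((if i = j then v j else 0)
        + (2 * ((Real.sqrt 2)⁻¹ * (Real.sqrt 2)⁻¹)) * ((l i - m i) * (eps j * (l j - m j) * v j))) :=
        Finset.sum_congr rfl fun j _ => hth j
    _ = v i + (2 * ((Real.sqrt 2)⁻¹ * (Real.sqrt 2)⁻¹)) * ((l i - m i) * ∑ j, (eps j * (l j - m j) * v j)) := by
        rw [Finset.sum_add_distrib, ← Finset.mul_sum, ← Finset.mul_sum]
        simp [Finset.sum_ite_eq]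
    _ = v i + (l i - m i) * (gg l v - gg m v) := by
        rw [hc]
        have h2 : gg l v - gg m v = ∑ j, (eps j * l j * v j - eps j * m j * v j) :=
          Eq.symm (Finset.sum_sub_distrib ..)
        have : ∑ j, (eps j * (l j - m j) * v j) = gg l v - gg m v := by
          rw [h2]; exact Finset.sum_congr rfl fun j _ => by ring
        rw [this]; ring
    _ = sw l m v i := by simp only [sw]; ring

end FRAME
section TRACE
variable {n : ℕ} (C : Fin n → Fin n → Fin n → Fin n → ℝ)

lemma trace0 (htr : ∀ b d, ∑ a, ∑ c, eta n a c * C a b c d = 0) (b d : Fin n) :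
    ∑ a, eps a * C a b a d = 0 := by
  have key : ∀ a, ∑ c, eta n a c * C a b c d = eps a * C a b a d := fun a => by
    simp [eta, Matrix.diagonal_apply, ite_mul, Finset.sum_ite_eq, eps]
  exact (Finset.sum_congr rfl fun a _ => (key a).symm).trans (htr b d)

lemma trace_ap (htr : ∀ b d, ∑ a, ∑ c, eta n a c * C a b c d = 0) (v w : Fin n → ℝ) :
    ∑ a, eps a * ap C (bv a) v (bv a) w = 0 := by
  have h : ∀ a, eps a * ap C (bv a) v (bv a) w
      = ∑ b, ∑ d, eps a * C a b a d * v b * w d := by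
    intro a
    rw [ap_bv13, Finset.mul_sum]
    refine Finset.sum_congr rfl fun b _ => ?_
    rw [Finset.mul_sum]
    exact Finset.sum_congr rfl fun d _ => by ring
  calc ∑ a, eps a * ap C (bv a) v (bv a) w
      = ∑ a, ∑ b, ∑ d, eps a * C a b a d * v b * w d :=
        Finset.sum_congr rfl fun a _ => h a
    _ = ∑ b, ∑ d, ∑ a, eps a * C a b a d * v b * w d := sum_rot3 _
    _ = 0 := by
        refine Finset.sum_eq_zero fun b _ => Finset.sum_eq_zero fun d _ => ?_
        have h2 : ∀ a, eps a * C a b a d * v b * w d = (eps a * C a b a d) * (v b * w d) :=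
          fun a => by ring
        rw [Finset.sum_congr rfl fun a _ => h2 a, ← Finset.sum_mul, trace0 C htr b d, zero_mul]

lemma trace_frame (htr : ∀ b d, ∑ a, ∑ c, eta n a c * C a b c d = 0)
    (l m : Fin n → ℝ) (hll : gg l l = 0) (hmm : gg m m = 0)
    (hlm : gg l m = 1) (hml : gg m l = 1) (v w : Fin n → ℝ) :
    ap C l v m w + ap C m v l w
      + (∑ a, eps a * ap C (pp l m (bv a)) v (pp l m (bv a)) w) = 0 := by
  have t0 := trace_ap C htr v w
  have hexp : ∀ a, eps a * ap C (bv a) v (bv a) w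
      = (eps a * m a * m a) * ap C l v l w
      + ((eps a * m a * l a) * ap C l v m w
      + (m a * ap C l v (pp l m (bv a)) w
      + ((eps a * l a * m a) * ap C m v l w
      + ((eps a * l a * l a) * ap C m v m w
      + (l a * ap C m v (pp l m (bv a)) w
      + (m a * ap C (pp l m (bv a)) v l w
      + (l a * ap C (pp l m (bv a)) v m w
      + eps a * ap C (pp l m (bv a)) v (pp l m (bv a)) w))))))) := by
    intro a
    rw [ap_expand₁ C (decomp_bv l m a), ap_expand₃ C (decomp_bv l m a),
      ap_expand₃ C (decomp_bv l m a), ap_expand₃ C (decomp_bv l m a)]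
    linear_combination (eps a * m a * m a * ap C l v l w
      + eps a * m a * l a * ap C l v m w
      + m a * ap C l v (pp l m (bv a)) w
      + eps a * l a * m a * ap C m v l w
      + eps a * l a * l a * ap C m v m w
      + l a * ap C m v (pp l m (bv a)) w
      + m a * ap C (pp l m (bv a)) v l w
      + l a * ap C (pp l m (bv a)) v m w) * eps_sq a
  have hsplit : (0:ℝ)
      = (∑ a, (eps a * m a * m a) * ap C l v l w)
      + ((∑ a, (eps a * m a * l a) * ap C l v m w)
      + ((∑ a, m a * ap C l v (pp l m (bv a)) w)
      + ((∑ a, (eps a * l a * m a) * ap C m v l w)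
      + ((∑ a, (eps a * l a * l a) * ap C m v m w)
      + ((∑ a, l a * ap C m v (pp l m (bv a)) w)
      + ((∑ a, m a * ap C (pp l m (bv a)) v l w)
      + ((∑ a, l a * ap C (pp l m (bv a)) v m w)
      + (∑ a, eps a * ap C (pp l m (bv a)) v (pp l m (bv a)) w)))))))) := by
    rw [show (∑ a, (eps a * m a * m a) * ap C l v l w)
      + ((∑ a, (eps a * m a * l a) * ap C l v m w)
      + ((∑ a, m a * ap C l v (pp l m (bv a)) w)
      + ((∑ a, (eps a * l a * m a) * ap C m v l w)
      + ((∑ a, (eps a * l a * l a) * ap C m v m w)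
      + ((∑ a, l a * ap C m v (pp l m (bv a)) w)
      + ((∑ a, m a * ap C (pp l m (bv a)) v l w)
      + ((∑ a, l a * ap C (pp l m (bv a)) v m w)
      + (∑ a, eps a * ap C (pp l m (bv a)) v (pp l m (bv a)) w))))))))
      = ∑ a, eps a * ap C (bv a) v (bv a) w from by
        rw [Finset.sum_congr rfl fun a _ => hexp a]
        simp only [Finset.sum_add_distrib]]
    exact t0.symm
  have e1 : (∑ a, (eps a * m a * m a) * ap C l v l w) = 0 := by
    rw [← Finset.sum_mul, show (∑ a, eps a * m a * m a) = gg m m from rfl, hmm, zero_mul]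
  have e2 : (∑ a, (eps a * m a * l a) * ap C l v m w) = ap C l v m w := by
    rw [← Finset.sum_mul, show (∑ a, eps a * m a * l a) = gg m l from rfl, hml, one_mul]
  have e3 : (∑ a, m a * ap C l v (pp l m (bv a)) w) = 0 := by
    rw [Finset.sum_congr rfl fun a _ => (ap_scale₃ C (m a) (pp l m (bv a)) l v w).symm,
      ← ap_sum₃, pm_zero l m hmm hml, ap_zero₃]
  have e4 : (∑ a, (eps a * l a * m a) * ap C m v l w) = ap C m v l w := by
    rw [← Finset.sum_mul, show (∑ a, eps a * l a * m a) = gg l m from rfl, hlm, one_mul]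
  have e5 : (∑ a, (eps a * l a * l a) * ap C m v m w) = 0 := by
    rw [← Finset.sum_mul, show (∑ a, eps a * l a * l a) = gg l l from rfl, hll, zero_mul]
  have e6 : (∑ a, l a * ap C m v (pp l m (bv a)) w) = 0 := by
    rw [Finset.sum_congr rfl fun a _ => (ap_scale₃ C (l a) (pp l m (bv a)) m v w).symm,
      ← ap_sum₃, pl_zero l m hll hlm, ap_zero₃]
  have e7 : (∑ a, m a * ap C (pp l m (bv a)) v l w) = 0 := by
    rw [Finset.sum_congr rfl fun a _ => (ap_scale₁ C (m a) (pp l m (bv a)) v l w).symm,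
      ← ap_sum₁, pm_zero l m hmm hml, ap_zero₁]
  have e8 : (∑ a, l a * ap C (pp l m (bv a)) v m w) = 0 := by
    rw [Finset.sum_congr rfl fun a _ => (ap_scale₁ C (l a) (pp l m (bv a)) v m w).symm,
      ← ap_sum₁, pl_zero l m hll hlm, ap_zero₁]
  linarith [hsplit, e1, e2, e3, e4, e5, e6, e7, e8]

end TRACE

section RED
variable {n : ℕ}

lemma red (l m : Fin n → ℝ) (Orr : (Fin n → ℝ) → Prop)
    (S : Fin n → Fin n → Fin n → Fin n → ℝ)
    (s12 : ∀ v₁ v₂ v₃ v₄ : Fin n → ℝ, ap S v₂ v₁ v₃ v₄ = -ap S v₁ v₂ v₃ v₄)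
    (s34 : ∀ v₁ v₂ v₃ v₄ : Fin n → ℝ, ap S v₁ v₂ v₄ v₃ = -ap S v₁ v₂ v₃ v₄)
    (sp : ∀ v₁ v₂ v₃ v₄ : Fin n → ℝ, ap S v₃ v₄ v₁ v₂ = ap S v₁ v₂ v₃ v₄)
    (K1 : ∀ x y, Orr x → Orr y → ap S l x l y = 0)
    (K2 : ∀ x y, Orr x → Orr y → ap S l x m y = 0)
    (K3 : ∀ x y, Orr x → Orr y → ap S m x m y = 0)
    (K4 : ∀ x y, Orr x → Orr y → ap S l m x y = 0)
    (K5 : ∀ x y z, Orr x → Orr y → Orr z → ap S l x y z = 0)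
    (K6 : ∀ x y z, Orr x → Orr y → Orr z → ap S m x y z = 0)
    (K7 : ∀ x, Orr x → ap S l m l x = 0)
    (K8 : ∀ x, Orr x → ap S l m m x = 0)
    (K9 : ap S l m l m = 0)
    (K10 : ∀ x y z w, Orr x → Orr y → Orr z → Orr w → ap S x y z w = 0) :
    ∀ w₁ w₂ w₃ w₄ : Fin n → ℝ,
      (w₁ = l ∨ w₁ = m ∨ Orr w₁) → (w₂ = l ∨ w₂ = m ∨ Orr w₂) →
      (w₃ = l ∨ w₃ = m ∨ Orr w₃) → (w₄ = l ∨ w₄ = m ∨ Orr w₄) →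
      ap S w₁ w₂ w₃ w₄ = 0 := by
  intro w₁ w₂ w₃ w₄ h1 h2 h3 h4
  rcases h1 with h1 | h1 | o1 <;> rcases h2 with h2 | h2 | o2 <;>
    rcases h3 with h3 | h3 | o3 <;> rcases h4 with h4 | h4 | o4
  · rw [h1, h2, h3, h4]; linarith [s12 l l l l]
  · rw [h1, h2, h3, h4]; linarith [s12 l l l m]
  · rw [h1, h2, h3]; linarith [s12 l l l w₄]
  · rw [h1, h2, h3, h4]; linarith [s12 l l m l]
  · rw [h1, h2, h3, h4]; linarith [s12 l l m m]
  · rw [h1, h2, h3]; linarith [s12 l l m w₄]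
  · rw [h1, h2, h4]; linarith [s12 l l w₃ l]
  · rw [h1, h2, h4]; linarith [s12 l l w₃ m]
  · rw [h1, h2]; linarith [s12 l l w₃ w₄]
  · rw [h1, h2, h3, h4]; linarith [s34 l m l l]
  · rw [h1, h2, h3, h4]; exact K9
  · rw [h1, h2, h3]; exact K7 w₄ o4
  · rw [h1, h2, h3, h4]; rw [s34]; simp only [neg_neg, neg_eq_zero]; exact K9
  · rw [h1, h2, h3, h4]; linarith [s34 l m m m]
  · rw [h1, h2, h3]; exact K8 w₄ o4
  · rw [h1, h2, h4]; rw [s34]; simp only [neg_neg, neg_eq_zero]; exact K7 w₃ o3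
  · rw [h1, h2, h4]; rw [s34]; simp only [neg_neg, neg_eq_zero]; exact K8 w₃ o3
  · rw [h1, h2]; exact K4 w₃ w₄ o3 o4
  · rw [h1, h3, h4]; linarith [s34 l w₂ l l]
  · rw [h1, h3, h4]; rw [sp]; exact K7 w₂ o2
  · rw [h1, h3]; exact K1 w₂ w₄ o2 o4
  · rw [h1, h3, h4]; rw [s34]; rw [sp]; simp only [neg_neg, neg_eq_zero]; exact K7 w₂ o2
  · rw [h1, h3, h4]; linarith [s34 l w₂ m m]
  · rw [h1, h3]; exact K2 w₂ w₄ o2 o4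
  · rw [h1, h4]; rw [s34]; simp only [neg_neg, neg_eq_zero]; exact K1 w₂ w₃ o2 o3
  · rw [h1, h4]; rw [s34]; simp only [neg_neg, neg_eq_zero]; exact K2 w₂ w₃ o2 o3
  · rw [h1]; exact K5 w₂ w₃ w₄ o2 o3 o4
  · rw [h1, h2, h3, h4]; linarith [s34 m l l l]
  · rw [h1, h2, h3, h4]; rw [s12]; simp only [neg_neg, neg_eq_zero]; exact K9
  · rw [h1, h2, h3]; rw [s12]; simp only [neg_neg, neg_eq_zero]; exact K7 w₄ o4
  · rw [h1, h2, h3, h4]; rw [s12]; rw [s34]; simp only [neg_neg, neg_eq_zero]; exact K9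
  · rw [h1, h2, h3, h4]; linarith [s34 m l m m]
  · rw [h1, h2, h3]; rw [s12]; simp only [neg_neg, neg_eq_zero]; exact K8 w₄ o4
  · rw [h1, h2, h4]; rw [s12]; rw [s34]; simp only [neg_neg, neg_eq_zero]; exact K7 w₃ o3
  · rw [h1, h2, h4]; rw [s12]; rw [s34]; simp only [neg_neg, neg_eq_zero]; exact K8 w₃ o3
  · rw [h1, h2]; rw [s12]; simp only [neg_neg, neg_eq_zero]; exact K4 w₃ w₄ o3 o4
  · rw [h1, h2, h3, h4]; linarith [s12 m m l l]
  · rw [h1, h2, h3, h4]; linarith [s12 m m l m]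
  · rw [h1, h2, h3]; linarith [s12 m m l w₄]
  · rw [h1, h2, h3, h4]; linarith [s12 m m m l]
  · rw [h1, h2, h3, h4]; linarith [s12 m m m m]
  · rw [h1, h2, h3]; linarith [s12 m m m w₄]
  · rw [h1, h2, h4]; linarith [s12 m m w₃ l]
  · rw [h1, h2, h4]; linarith [s12 m m w₃ m]
  · rw [h1, h2]; linarith [s12 m m w₃ w₄]
  · rw [h1, h3, h4]; linarith [s34 m w₂ l l]
  · rw [h1, h3, h4]; rw [sp]; exact K8 w₂ o2
  · rw [h1, h3]; rw [sp]; exact K2 w₄ w₂ o4 o2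
  · rw [h1, h3, h4]; rw [s34]; rw [sp]; simp only [neg_neg, neg_eq_zero]; exact K8 w₂ o2
  · rw [h1, h3, h4]; linarith [s34 m w₂ m m]
  · rw [h1, h3]; exact K3 w₂ w₄ o2 o4
  · rw [h1, h4]; rw [s34]; rw [sp]; simp only [neg_neg, neg_eq_zero]; exact K2 w₃ w₂ o3 o2
  · rw [h1, h4]; rw [s34]; simp only [neg_neg, neg_eq_zero]; exact K3 w₂ w₃ o2 o3
  · rw [h1]; exact K6 w₂ w₃ w₄ o2 o3 o4
  · rw [h2, h3, h4]; linarith [s34 w₁ l l l]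
  · rw [h2, h3, h4]; rw [s12]; rw [sp]; simp only [neg_neg, neg_eq_zero]; exact K7 w₁ o1
  · rw [h2, h3]; rw [s12]; simp only [neg_neg, neg_eq_zero]; exact K1 w₁ w₄ o1 o4
  · rw [h2, h3, h4]; rw [s12]; rw [s34]; rw [sp]; simp only [neg_neg, neg_eq_zero]; exact K7 w₁ o1
  · rw [h2, h3, h4]; linarith [s34 w₁ l m m]
  · rw [h2, h3]; rw [s12]; simp only [neg_neg, neg_eq_zero]; exact K2 w₁ w₄ o1 o4
  · rw [h2, h4]; rw [s12]; rw [s34]; simp only [neg_neg, neg_eq_zero]; exact K1 w₁ w₃ o1 o3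
  · rw [h2, h4]; rw [s12]; rw [s34]; simp only [neg_neg, neg_eq_zero]; exact K2 w₁ w₃ o1 o3
  · rw [h2]; rw [s12]; simp only [neg_neg, neg_eq_zero]; exact K5 w₁ w₃ w₄ o1 o3 o4
  · rw [h2, h3, h4]; linarith [s34 w₁ m l l]
  · rw [h2, h3, h4]; rw [s12]; rw [sp]; simp only [neg_neg, neg_eq_zero]; exact K8 w₁ o1
  · rw [h2, h3]; rw [s12]; rw [sp]; simp only [neg_neg, neg_eq_zero]; exact K2 w₄ w₁ o4 o1
  · rw [h2, h3, h4]; rw [s12]; rw [s34]; rw [sp]; simp only [neg_neg, neg_eq_zero]; exact K8 w₁ o1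
  · rw [h2, h3, h4]; linarith [s34 w₁ m m m]
  · rw [h2, h3]; rw [s12]; simp only [neg_neg, neg_eq_zero]; exact K3 w₁ w₄ o1 o4
  · rw [h2, h4]; rw [s12]; rw [s34]; rw [sp]; simp only [neg_neg, neg_eq_zero]; exact K2 w₃ w₁ o3 o1
  · rw [h2, h4]; rw [s12]; rw [s34]; simp only [neg_neg, neg_eq_zero]; exact K3 w₁ w₃ o1 o3
  · rw [h2]; rw [s12]; simp only [neg_neg, neg_eq_zero]; exact K6 w₁ w₃ w₄ o1 o3 o4
  · rw [h3, h4]; linarith [s34 w₁ w₂ l l]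
  · rw [h3, h4]; rw [sp]; exact K4 w₁ w₂ o1 o2
  · rw [h3]; rw [sp]; exact K5 w₄ w₁ w₂ o4 o1 o2
  · rw [h3, h4]; rw [s34]; rw [sp]; simp only [neg_neg, neg_eq_zero]; exact K4 w₁ w₂ o1 o2
  · rw [h3, h4]; linarith [s34 w₁ w₂ m m]
  · rw [h3]; rw [sp]; exact K6 w₄ w₁ w₂ o4 o1 o2
  · rw [h4]; rw [s34]; rw [sp]; simp only [neg_neg, neg_eq_zero]; exact K5 w₃ w₁ w₂ o3 o1 o2
  · rw [h4]; rw [s34]; rw [sp]; simp only [neg_neg, neg_eq_zero]; exact K6 w₃ w₁ w₂ o3 o1 o2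
  · exact K10 w₁ w₂ w₃ w₄ o1 o2 o3 o4

end RED
section ALLV
variable {n : ℕ}

lemma allv (l m : Fin n → ℝ) (Orr : (Fin n → ℝ) → Prop)
    (S : Fin n → Fin n → Fin n → Fin n → ℝ)
    (gl gm : (Fin n → ℝ) → ℝ) (P : (Fin n → ℝ) → (Fin n → ℝ))
    (hdec : ∀ v, v = fun i => gm v * l i + gl v * m i + P v i)
    (hPO : ∀ v, Orr (P v))
    (base : ∀ w₁ w₂ w₃ w₄ : Fin n → ℝ,
      (w₁ = l ∨ w₁ = m ∨ Orr w₁) → (w₂ = l ∨ w₂ = m ∨ Orr w₂) →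
      (w₃ = l ∨ w₃ = m ∨ Orr w₃) → (w₄ = l ∨ w₄ = m ∨ Orr w₄) →
      ap S w₁ w₂ w₃ w₄ = 0) :
    ∀ v₁ v₂ v₃ v₄, ap S v₁ v₂ v₃ v₄ = 0 := by
  have cl : ∀ w : Fin n → ℝ, w = l → (w = l ∨ w = m ∨ Orr w) := fun w h => Or.inl h
  have e4 : ∀ w₁ w₂ w₃ : Fin n → ℝ,
      (w₁ = l ∨ w₁ = m ∨ Orr w₁) → (w₂ = l ∨ w₂ = m ∨ Orr w₂) →
      (w₃ = l ∨ w₃ = m ∨ Orr w₃) → ∀ v, ap S w₁ w₂ w₃ v = 0 := by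
    intro w₁ w₂ w₃ h1 h2 h3 v
    rw [ap_expand₄ S (hdec v),
      base w₁ w₂ w₃ l h1 h2 h3 (Or.inl rfl),
      base w₁ w₂ w₃ m h1 h2 h3 (Or.inr (Or.inl rfl)),
      base w₁ w₂ w₃ (P v) h1 h2 h3 (Or.inr (Or.inr (hPO v)))]
    ring
  have e3 : ∀ w₁ w₂ : Fin n → ℝ,
      (w₁ = l ∨ w₁ = m ∨ Orr w₁) → (w₂ = l ∨ w₂ = m ∨ Orr w₂) →
      ∀ v₃ v₄, ap S w₁ w₂ v₃ v₄ = 0 := by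
    intro w₁ w₂ h1 h2 v₃ v₄
    rw [ap_expand₃ S (hdec v₃),
      e4 w₁ w₂ l h1 h2 (Or.inl rfl) v₄,
      e4 w₁ w₂ m h1 h2 (Or.inr (Or.inl rfl)) v₄,
      e4 w₁ w₂ (P v₃) h1 h2 (Or.inr (Or.inr (hPO v₃))) v₄]
    ring
  have e2 : ∀ w₁ : Fin n → ℝ, (w₁ = l ∨ w₁ = m ∨ Orr w₁) →
      ∀ v₂ v₃ v₄, ap S w₁ v₂ v₃ v₄ = 0 := by
    intro w₁ h1 v₂ v₃ v₄
    rw [ap_expand₂ S (hdec v₂),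
      e3 w₁ l h1 (Or.inl rfl) v₃ v₄,
      e3 w₁ m h1 (Or.inr (Or.inl rfl)) v₃ v₄,
      e3 w₁ (P v₂) h1 (Or.inr (Or.inr (hPO v₂))) v₃ v₄]
    ring
  intro v₁ v₂ v₃ v₄
  rw [ap_expand₁ S (hdec v₁),
    e2 l (Or.inl rfl) v₂ v₃ v₄,
    e2 m (Or.inr (Or.inl rfl)) v₂ v₃ v₄,
    e2 (P v₁) (Or.inr (Or.inr (hPO v₁))) v₂ v₃ v₄]
  ring

end ALLV


/-- Frame characterization of PE/PM Weyl tensors in a `u`-adapted null frame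
`u = (ℓ - m)/√2`. -/
theorem stmt8 {n : ℕ} (hn : 4 ≤ n)
    (C : Fin n → Fin n → Fin n → Fin n → ℝ)
    (hanti1 : ∀ a b c d, C b a c d = -C a b c d)
    (hanti2 : ∀ a b c d, C a b d c = -C a b c d)
    (hpair : ∀ a b c d, C c d a b = C a b c d)
    (hbianchi : ∀ a b c d, C a b c d + C a c d b + C a d b c = 0)
    (htracefree : ∀ b d, ∑ a, ∑ c, eta n a c * C a b c d = 0)
    (l m : Fin n → ℝ) (hl : IsNull l) (hm : IsNull m)
    (hlm : l ⬝ᵥ (eta n).mulVec m = 1)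
    (u : Fin n → ℝ) (hu : u = (Real.sqrt 2)⁻¹ • (l - m)) :
    (pull (theta u) C = C ↔
      ∀ x y z : Fin n → ℝ,
        l ⬝ᵥ (eta n).mulVec x = 0 → m ⬝ᵥ (eta n).mulVec x = 0 →
        l ⬝ᵥ (eta n).mulVec y = 0 → m ⬝ᵥ (eta n).mulVec y = 0 →
        l ⬝ᵥ (eta n).mulVec z = 0 → m ⬝ᵥ (eta n).mulVec z = 0 →
          ap C l x l y = ap C m x m y ∧
          ap C l x y z = ap C m x y z ∧
          ap C l m x y = 0) ∧
    (pull (theta u) C = (fun a b c d => -(C a b c d)) ↔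
      ∀ x y z w : Fin n → ℝ,
        l ⬝ᵥ (eta n).mulVec x = 0 → m ⬝ᵥ (eta n).mulVec x = 0 →
        l ⬝ᵥ (eta n).mulVec y = 0 → m ⬝ᵥ (eta n).mulVec y = 0 →
        l ⬝ᵥ (eta n).mulVec z = 0 → m ⬝ᵥ (eta n).mulVec z = 0 →
        l ⬝ᵥ (eta n).mulVec w = 0 → m ⬝ᵥ (eta n).mulVec w = 0 →
          ap C l x l y = -(ap C m x m y) ∧
          ap C l x y z = -(ap C m x y z) ∧
          ap C x y z w = 0) := by
  have gll : gg l l = 0 := by rw [← g_dot]; exact hl.2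
  have gmm : gg m m = 0 := by rw [← g_dot]; exact hm.2
  have glm : gg l m = 1 := by rw [← g_dot]; exact hlm
  have gml : gg m l = 1 := (gg_symm m l).trans glm
  have hsw : ∀ v, (theta u) *ᵥ v = sw l m v := theta_mulVec l m hu
  have swl : sw l m l = m := sw_l l m gll gml
  have swm : sw l m m = l := sw_m l m glm gmm
  have s12 := ap_swap12 C hanti1
  have s34 := ap_swap34 C hanti2
  have spp := ap_pair C hpair
  have sbi := ap_bianchi C hbianchi
  have flip2 : ∀ v₁ v₂ v₃ v₄, ap C v₂ v₁ v₄ v₃ = ap C v₁ v₂ v₃ v₄ := by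
    intro v₁ v₂ v₃ v₄
    have a1 := s12 v₁ v₂ v₄ v₃
    have a2 := s34 v₁ v₂ v₃ v₄
    linarith
  have diag12 : ∀ v w z : Fin n → ℝ, ap C v v w z = 0 := fun v w z => by
    have := s12 v v w z; linarith
  have tf := trace_frame C htracefree l m gll gmm glm gml
  have ppol := gg_pp_l l m gll glm
  have ppom := gg_pp_m l m gmm gml
  have Opp : ∀ v, gg l (pp l m v) = 0 ∧ gg m (pp l m v) = 0 := fun v => ⟨ppol v, ppom v⟩
  have cdl : ∀ x : Fin n → ℝ, gg l x = 0 → l ⬝ᵥ (eta n).mulVec x = 0 := fun x hx => by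
    rw [g_dot]; exact hx
  have cdm : ∀ x : Fin n → ℝ, gg m x = 0 → m ⬝ᵥ (eta n).mulVec x = 0 := fun x hx => by
    rw [g_dot]; exact hx
  constructor
  · constructor
    · -- PE forward
      intro h x y z hx1 hx2 hy1 hy2 hz1 hz2
      rw [g_dot] at hx1 hx2 hy1 hy2 hz1 hz2
      have key : ∀ v₁ v₂ v₃ v₄ : Fin n → ℝ,
          ap C (sw l m v₁) (sw l m v₂) (sw l m v₃) (sw l m v₄) = ap C v₁ v₂ v₃ v₄ := by
        intro v₁ v₂ v₃ v₄
        rw [← hsw, ← hsw, ← hsw, ← hsw, ← ap_pull, h]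
      have swx := sw_orth l m hx1 hx2
      have swy := sw_orth l m hy1 hy2
      have swz := sw_orth l m hz1 hz2
      refine ⟨?_, ?_, ?_⟩
      · have hk := key m x m y; rwa [swm, swx, swy] at hk
      · have hk := key m x y z; rwa [swm, swx, swy, swz] at hk
      · have hk := key m l x y; rw [swm, swl, swx, swy] at hk
        have h2 := s12 l m x y
        linarith
    · -- PE backward
      intro hc
      have H1 : ∀ x y : Fin n → ℝ, (gg l x = 0 ∧ gg m x = 0) → (gg l y = 0 ∧ gg m y = 0) →
          ap C l x l y = ap C m x m y := fun x y hx hy =>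
        (hc x y y (cdl x hx.1) (cdm x hx.2) (cdl y hy.1) (cdm y hy.2) (cdl y hy.1) (cdm y hy.2)).1
      have H2 : ∀ x y z : Fin n → ℝ, (gg l x = 0 ∧ gg m x = 0) → (gg l y = 0 ∧ gg m y = 0) →
          (gg l z = 0 ∧ gg m z = 0) → ap C l x y z = ap C m x y z := fun x y z hx hy hz =>
        (hc x y z (cdl x hx.1) (cdm x hx.2) (cdl y hy.1) (cdm y hy.2) (cdl z hz.1) (cdm z hz.2)).2.1
      have H3 : ∀ x y : Fin n → ℝ, (gg l x = 0 ∧ gg m x = 0) → (gg l y = 0 ∧ gg m y = 0) →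
          ap C l m x y = 0 := fun x y hx hy =>
        (hc x y y (cdl x hx.1) (cdm x hx.2) (cdl y hy.1) (cdm y hy.2) (cdl y hy.1) (cdm y hy.2)).2.2
      have D1 : ∀ x y : Fin n → ℝ, (gg l x = 0 ∧ gg m x = 0) → (gg l y = 0 ∧ gg m y = 0) →
          ap C l x m y = ap C l y m x := by
        intro x y hx hy
        have hb := sbi l x m y
        have z1 : ap C l m y x = 0 := H3 y x hy hx
        have z2 := s34 l y m x
        linarith
      have D2 : ∀ x : Fin n → ℝ, (gg l x = 0 ∧ gg m x = 0) →
          ap C l m l x = -ap C l m m x := by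
        intro x hx
        have t1 := tf l x
        have t2 := tf m x
        have z1 : ap C l l m x = 0 := diag12 l m x
        have z2 : ap C m m l x = 0 := diag12 m l x
        have e1 := s12 l m l x
        have hSeq : (∑ a, eps a * ap C (pp l m (bv a)) l (pp l m (bv a)) x)
            = (∑ a, eps a * ap C (pp l m (bv a)) m (pp l m (bv a)) x) := by
          refine Finset.sum_congr rfl fun a _ => ?_
          have q1 := flip2 l (pp l m (bv a)) x (pp l m (bv a))
          have q2 := flip2 m (pp l m (bv a)) x (pp l m (bv a))
          have hH := H2 (pp l m (bv a)) x (pp l m (bv a)) (Opp _) hx (Opp _)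
          have he : ap C (pp l m (bv a)) l (pp l m (bv a)) x
              = ap C (pp l m (bv a)) m (pp l m (bv a)) x := by linarith
          rw [he]
        linarith
      set S : Fin n → Fin n → Fin n → Fin n → ℝ :=
        fun a b c d => pull (theta u) C a b c d - C a b c d with hSdef
      have apS : ∀ v₁ v₂ v₃ v₄, ap S v₁ v₂ v₃ v₄
          = ap C (sw l m v₁) (sw l m v₂) (sw l m v₃) (sw l m v₄) - ap C v₁ v₂ v₃ v₄ := by
        intro v₁ v₂ v₃ v₄
        rw [hSdef, ap_tsub, ap_pull, hsw, hsw, hsw, hsw]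
      have Ss12 : ∀ v₁ v₂ v₃ v₄ : Fin n → ℝ, ap S v₂ v₁ v₃ v₄ = -ap S v₁ v₂ v₃ v₄ := by
        intro v₁ v₂ v₃ v₄
        rw [apS, apS]
        have a1 := s12 (sw l m v₁) (sw l m v₂) (sw l m v₃) (sw l m v₄)
        have a2 := s12 v₁ v₂ v₃ v₄
        linarith
      have Ss34 : ∀ v₁ v₂ v₃ v₄ : Fin n → ℝ, ap S v₁ v₂ v₄ v₃ = -ap S v₁ v₂ v₃ v₄ := by
        intro v₁ v₂ v₃ v₄
        rw [apS, apS]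
        have a1 := s34 (sw l m v₁) (sw l m v₂) (sw l m v₃) (sw l m v₄)
        have a2 := s34 v₁ v₂ v₃ v₄
        linarith
      have Ssp : ∀ v₁ v₂ v₃ v₄ : Fin n → ℝ, ap S v₃ v₄ v₁ v₂ = ap S v₁ v₂ v₃ v₄ := by
        intro v₁ v₂ v₃ v₄
        rw [apS, apS]
        have a1 := spp (sw l m v₁) (sw l m v₂) (sw l m v₃) (sw l m v₄)
        have a2 := spp v₁ v₂ v₃ v₄
        linarith
      have K1 : ∀ x y, (gg l x = 0 ∧ gg m x = 0) → (gg l y = 0 ∧ gg m y = 0) →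
          ap S l x l y = 0 := by
        intro x y hx hy
        rw [apS, swl, sw_orth l m hx.1 hx.2, sw_orth l m hy.1 hy.2]
        have := H1 x y hx hy; linarith
      have K2 : ∀ x y, (gg l x = 0 ∧ gg m x = 0) → (gg l y = 0 ∧ gg m y = 0) →
          ap S l x m y = 0 := by
        intro x y hx hy
        rw [apS, swl, swm, sw_orth l m hx.1 hx.2, sw_orth l m hy.1 hy.2]
        have a1 := spp l y m x
        have a2 := D1 x y hx hy
        linarith
      have K3 : ∀ x y, (gg l x = 0 ∧ gg m x = 0) → (gg l y = 0 ∧ gg m y = 0) →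
          ap S m x m y = 0 := by
        intro x y hx hy
        rw [apS, swm, sw_orth l m hx.1 hx.2, sw_orth l m hy.1 hy.2]
        have := H1 x y hx hy; linarith
      have K4 : ∀ x y, (gg l x = 0 ∧ gg m x = 0) → (gg l y = 0 ∧ gg m y = 0) →
          ap S l m x y = 0 := by
        intro x y hx hy
        rw [apS, swl, swm, sw_orth l m hx.1 hx.2, sw_orth l m hy.1 hy.2]
        have a1 := s12 l m x y
        have a2 := H3 x y hx hy
        linarith
      have K5 : ∀ x y z, (gg l x = 0 ∧ gg m x = 0) → (gg l y = 0 ∧ gg m y = 0) →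
          (gg l z = 0 ∧ gg m z = 0) → ap S l x y z = 0 := by
        intro x y z hx hy hz
        rw [apS, swl, sw_orth l m hx.1 hx.2, sw_orth l m hy.1 hy.2, sw_orth l m hz.1 hz.2]
        have := H2 x y z hx hy hz; linarith
      have K6 : ∀ x y z, (gg l x = 0 ∧ gg m x = 0) → (gg l y = 0 ∧ gg m y = 0) →
          (gg l z = 0 ∧ gg m z = 0) → ap S m x y z = 0 := by
        intro x y z hx hy hz
        rw [apS, swm, sw_orth l m hx.1 hx.2, sw_orth l m hy.1 hy.2, sw_orth l m hz.1 hz.2]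
        have := H2 x y z hx hy hz; linarith
      have K7 : ∀ x, (gg l x = 0 ∧ gg m x = 0) → ap S l m l x = 0 := by
        intro x hx
        rw [apS, swl, swm, sw_orth l m hx.1 hx.2]
        have a1 := s12 l m m x
        have a2 := D2 x hx
        linarith
      have K8 : ∀ x, (gg l x = 0 ∧ gg m x = 0) → ap S l m m x = 0 := by
        intro x hx
        rw [apS, swl, swm, sw_orth l m hx.1 hx.2]
        have a1 := s12 l m l x
        have a2 := D2 x hx
        linarith
      have K9 : ap S l m l m = 0 := by
        rw [apS, swl, swm]
        have a1 := s12 l m m l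
        have a2 := s34 l m l m
        linarith
      have K10 : ∀ x y z w, (gg l x = 0 ∧ gg m x = 0) → (gg l y = 0 ∧ gg m y = 0) →
          (gg l z = 0 ∧ gg m z = 0) → (gg l w = 0 ∧ gg m w = 0) → ap S x y z w = 0 := by
        intro x y z w hx hy hz hw
        rw [apS, sw_orth l m hx.1 hx.2, sw_orth l m hy.1 hy.2, sw_orth l m hz.1 hz.2,
          sw_orth l m hw.1 hw.2]
        ring
      have base := red l m (fun x => gg l x = 0 ∧ gg m x = 0) S Ss12 Ss34 Ssp
        K1 K2 K3 K4 K5 K6 K7 K8 K9 K10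
      have hall := allv l m (fun x => gg l x = 0 ∧ gg m x = 0) S
        (fun v => gg l v) (fun v => gg m v) (pp l m) (decomp_v l m) Opp base
      funext a b c d
      have h0 := hall (bv a) (bv b) (bv c) (bv d)
      rw [ap_bv] at h0
      have h1 : pull (theta u) C a b c d - C a b c d = 0 := h0
      linarith
  · constructor
    · -- PM forward
      intro h x y z w hx1 hx2 hy1 hy2 hz1 hz2 hw1 hw2
      rw [g_dot] at hx1 hx2 hy1 hy2 hz1 hz2 hw1 hw2
      have key : ∀ v₁ v₂ v₃ v₄ : Fin n → ℝ,
          ap C (sw l m v₁) (sw l m v₂) (sw l m v₃) (sw l m v₄) = -ap C v₁ v₂ v₃ v₄ := by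
        intro v₁ v₂ v₃ v₄
        rw [← hsw, ← hsw, ← hsw, ← hsw, ← ap_pull, h, ap_tneg]
      have swx := sw_orth l m hx1 hx2
      have swy := sw_orth l m hy1 hy2
      have swz := sw_orth l m hz1 hz2
      have sww := sw_orth l m hw1 hw2
      refine ⟨?_, ?_, ?_⟩
      · have hk := key m x m y; rwa [swm, swx, swy] at hk
      · have hk := key m x y z; rwa [swm, swx, swy, swz] at hk
      · have hk := key x y z w; rw [swx, swy, swz, sww] at hk
        linarith
    · -- PM backward
      intro hc
      have H1 : ∀ x y : Fin n → ℝ, (gg l x = 0 ∧ gg m x = 0) → (gg l y = 0 ∧ gg m y = 0) →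
          ap C l x l y = -ap C m x m y := fun x y hx hy =>
        (hc x y y y (cdl x hx.1) (cdm x hx.2) (cdl y hy.1) (cdm y hy.2) (cdl y hy.1) (cdm y hy.2)
          (cdl y hy.1) (cdm y hy.2)).1
      have H2 : ∀ x y z : Fin n → ℝ, (gg l x = 0 ∧ gg m x = 0) → (gg l y = 0 ∧ gg m y = 0) →
          (gg l z = 0 ∧ gg m z = 0) → ap C l x y z = -ap C m x y z := fun x y z hx hy hz =>
        (hc x y z z (cdl x hx.1) (cdm x hx.2) (cdl y hy.1) (cdm y hy.2) (cdl z hz.1) (cdm z hz.2)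
          (cdl z hz.1) (cdm z hz.2)).2.1
      have H3 : ∀ x y z w : Fin n → ℝ, (gg l x = 0 ∧ gg m x = 0) → (gg l y = 0 ∧ gg m y = 0) →
          (gg l z = 0 ∧ gg m z = 0) → (gg l w = 0 ∧ gg m w = 0) → ap C x y z w = 0 :=
        fun x y z w hx hy hz hw =>
        (hc x y z w (cdl x hx.1) (cdm x hx.2) (cdl y hy.1) (cdm y hy.2) (cdl z hz.1) (cdm z hz.2)
          (cdl w hw.1) (cdm w hw.2)).2.2
      have D1 : ∀ x y : Fin n → ℝ, (gg l x = 0 ∧ gg m x = 0) → (gg l y = 0 ∧ gg m y = 0) →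
          ap C l x m y = -ap C l y m x := by
        intro x y hx hy
        have t := tf x y
        have hz : (∑ a, eps a * ap C (pp l m (bv a)) x (pp l m (bv a)) y) = 0 :=
          Finset.sum_eq_zero fun a _ => by
            rw [H3 (pp l m (bv a)) x (pp l m (bv a)) y (Opp _) hx (Opp _) hy, mul_zero]
        have a1 := spp l y m x
        linarith
      have D2 : ∀ x : Fin n → ℝ, (gg l x = 0 ∧ gg m x = 0) →
          ap C l m l x = ap C l m m x := by
        intro x hx
        have t1 := tf l x
        have t2 := tf m x
        have z1 : ap C l l m x = 0 := diag12 l m x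
        have z2 : ap C m m l x = 0 := diag12 m l x
        have e1 := s12 l m l x
        have hSeq : (∑ a, eps a * ap C (pp l m (bv a)) l (pp l m (bv a)) x)
            = -(∑ a, eps a * ap C (pp l m (bv a)) m (pp l m (bv a)) x) := by
          rw [← Finset.sum_neg_distrib]
          refine Finset.sum_congr rfl fun a _ => ?_
          have q1 := flip2 l (pp l m (bv a)) x (pp l m (bv a))
          have q2 := flip2 m (pp l m (bv a)) x (pp l m (bv a))
          have hH := H2 (pp l m (bv a)) x (pp l m (bv a)) (Opp _) hx (Opp _)
          have he : ap C (pp l m (bv a)) l (pp l m (bv a)) x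
              = -ap C (pp l m (bv a)) m (pp l m (bv a)) x := by linarith
          rw [he]; ring
        linarith
      have D3 : ap C l m l m = 0 := by
        have t := tf l m
        have z1 : ap C l l m m = 0 := diag12 l m m
        have e1 := s12 l m l m
        have hz : (∑ a, eps a * ap C (pp l m (bv a)) l (pp l m (bv a)) m) = 0 :=
          Finset.sum_eq_zero fun a _ => by
            have q1 := flip2 l (pp l m (bv a)) m (pp l m (bv a))
            have q2 := D1 (pp l m (bv a)) (pp l m (bv a)) (Opp _) (Opp _)
            have he : ap C (pp l m (bv a)) l (pp l m (bv a)) m = 0 := by linarith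
            rw [he, mul_zero]
        linarith
      set S : Fin n → Fin n → Fin n → Fin n → ℝ :=
        fun a b c d => pull (theta u) C a b c d + C a b c d with hSdef
      have apS : ∀ v₁ v₂ v₃ v₄, ap S v₁ v₂ v₃ v₄
          = ap C (sw l m v₁) (sw l m v₂) (sw l m v₃) (sw l m v₄) + ap C v₁ v₂ v₃ v₄ := by
        intro v₁ v₂ v₃ v₄
        rw [hSdef, ap_tadd, ap_pull, hsw, hsw, hsw, hsw]
      have Ss12 : ∀ v₁ v₂ v₃ v₄ : Fin n → ℝ, ap S v₂ v₁ v₃ v₄ = -ap S v₁ v₂ v₃ v₄ := by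
        intro v₁ v₂ v₃ v₄
        rw [apS, apS]
        have a1 := s12 (sw l m v₁) (sw l m v₂) (sw l m v₃) (sw l m v₄)
        have a2 := s12 v₁ v₂ v₃ v₄
        linarith
      have Ss34 : ∀ v₁ v₂ v₃ v₄ : Fin n → ℝ, ap S v₁ v₂ v₄ v₃ = -ap S v₁ v₂ v₃ v₄ := by
        intro v₁ v₂ v₃ v₄
        rw [apS, apS]
        have a1 := s34 (sw l m v₁) (sw l m v₂) (sw l m v₃) (sw l m v₄)
        have a2 := s34 v₁ v₂ v₃ v₄
        linarith
      have Ssp : ∀ v₁ v₂ v₃ v₄ : Fin n → ℝ, ap S v₃ v₄ v₁ v₂ = ap S v₁ v₂ v₃ v₄ := by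
        intro v₁ v₂ v₃ v₄
        rw [apS, apS]
        have a1 := spp (sw l m v₁) (sw l m v₂) (sw l m v₃) (sw l m v₄)
        have a2 := spp v₁ v₂ v₃ v₄
        linarith
      have K1 : ∀ x y, (gg l x = 0 ∧ gg m x = 0) → (gg l y = 0 ∧ gg m y = 0) →
          ap S l x l y = 0 := by
        intro x y hx hy
        rw [apS, swl, sw_orth l m hx.1 hx.2, sw_orth l m hy.1 hy.2]
        have := H1 x y hx hy; linarith
      have K2 : ∀ x y, (gg l x = 0 ∧ gg m x = 0) → (gg l y = 0 ∧ gg m y = 0) →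
          ap S l x m y = 0 := by
        intro x y hx hy
        rw [apS, swl, swm, sw_orth l m hx.1 hx.2, sw_orth l m hy.1 hy.2]
        have a1 := spp l y m x
        have a2 := D1 x y hx hy
        linarith
      have K3 : ∀ x y, (gg l x = 0 ∧ gg m x = 0) → (gg l y = 0 ∧ gg m y = 0) →
          ap S m x m y = 0 := by
        intro x y hx hy
        rw [apS, swm, sw_orth l m hx.1 hx.2, sw_orth l m hy.1 hy.2]
        have := H1 x y hx hy; linarith
      have K4 : ∀ x y, (gg l x = 0 ∧ gg m x = 0) → (gg l y = 0 ∧ gg m y = 0) →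
          ap S l m x y = 0 := by
        intro x y hx hy
        rw [apS, swl, swm, sw_orth l m hx.1 hx.2, sw_orth l m hy.1 hy.2]
        have a1 := s12 l m x y
        linarith
      have K5 : ∀ x y z, (gg l x = 0 ∧ gg m x = 0) → (gg l y = 0 ∧ gg m y = 0) →
          (gg l z = 0 ∧ gg m z = 0) → ap S l x y z = 0 := by
        intro x y z hx hy hz
        rw [apS, swl, sw_orth l m hx.1 hx.2, sw_orth l m hy.1 hy.2, sw_orth l m hz.1 hz.2]
        have := H2 x y z hx hy hz; linarith
      have K6 : ∀ x y z, (gg l x = 0 ∧ gg m x = 0) → (gg l y = 0 ∧ gg m y = 0) →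
          (gg l z = 0 ∧ gg m z = 0) → ap S m x y z = 0 := by
        intro x y z hx hy hz
        rw [apS, swm, sw_orth l m hx.1 hx.2, sw_orth l m hy.1 hy.2, sw_orth l m hz.1 hz.2]
        have := H2 x y z hx hy hz; linarith
      have K7 : ∀ x, (gg l x = 0 ∧ gg m x = 0) → ap S l m l x = 0 := by
        intro x hx
        rw [apS, swl, swm, sw_orth l m hx.1 hx.2]
        have a1 := s12 l m m x
        have a2 := D2 x hx
        linarith
      have K8 : ∀ x, (gg l x = 0 ∧ gg m x = 0) → ap S l m m x = 0 := by
        intro x hx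
        rw [apS, swl, swm, sw_orth l m hx.1 hx.2]
        have a1 := s12 l m l x
        have a2 := D2 x hx
        linarith
      have K9 : ap S l m l m = 0 := by
        rw [apS, swl, swm]
        have a1 := s12 l m m l
        have a2 := s34 l m l m
        linarith
      have K10 : ∀ x y z w, (gg l x = 0 ∧ gg m x = 0) → (gg l y = 0 ∧ gg m y = 0) →
          (gg l z = 0 ∧ gg m z = 0) → (gg l w = 0 ∧ gg m w = 0) → ap S x y z w = 0 := by
        intro x y z w hx hy hz hw
        rw [apS, sw_orth l m hx.1 hx.2, sw_orth l m hy.1 hy.2, sw_orth l m hz.1 hz.2,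
          sw_orth l m hw.1 hw.2]
        have := H3 x y z w hx hy hz hw
        linarith
      have base := red l m (fun x => gg l x = 0 ∧ gg m x = 0) S Ss12 Ss34 Ssp
        K1 K2 K3 K4 K5 K6 K7 K8 K9 K10
      have hall := allv l m (fun x => gg l x = 0 ∧ gg m x = 0) S
        (fun v => gg l v) (fun v => gg m v) (pp l m) (decomp_v l m) Opp base
      funext a b c d
      have h0 := hall (bv a) (bv b) (bv c) (bv d)
      rw [ap_bv] at h0
      have h1 : pull (theta u) C a b c d + C a b c d = 0 := h0
      show pull (theta u) C a b c d = -(C a b c d)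
      linarith

end
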